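/- Let 1 ≤ p < ∞. For every pair of functions F, G : [0,1] → ℂ of finite total Wiener p-variation such that inf_{x∈[0,1]}(|F(x)| + |G(x)|) > 0, the multiplication in BV_p[0,1] is locally open at (F, G): for every ε > 0 there exists δ > 0 such that every h with ‖h‖_{BV_p} < δ can be written as h = f·g − F·G with ‖f − F‖_{BV_p} < ε and ‖g − G‖_{BV_p} < ε, where f, g ∈ BV_p[0,1]. -/

import Mathlib

open Finset in
/-- The set of all Wiener `p`-variation sums of `f` over partitions of `[a,b]`. -/
def varSums (p : ℝ) (f : ℝ → ℂ) (a b : ℝ) : Set ℝ :=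
  {s | ∃ (m : ℕ) (t : ℕ → ℝ), 0 < m ∧ t 0 = a ∧ t m = b ∧
        (∀ j < m, t j < t (j + 1)) ∧
        s = ∑ j ∈ Finset.range m, ‖f (t (j + 1)) - f (t j)‖ ^ p}

/-- The total Wiener `p`-variation of `f` on `[a,b]`. -/
noncomputable def pVar (p : ℝ) (f : ℝ → ℂ) (a b : ℝ) : ℝ := sSup (varSums p f a b)

/-- The supremum norm of `f` on `[0,1]`. -/
noncomputable def supNorm (f : ℝ → ℂ) : ℝ :=
  sSup ((fun x => ‖f x‖) '' Set.Icc (0:ℝ) 1)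

/-- The infimum of `|f|` on `[0,1]`. -/
noncomputable def infAbs (f : ℝ → ℂ) : ℝ :=
  sInf ((fun x => ‖f x‖) '' Set.Icc (0:ℝ) 1)

/-- The `BV_p` norm of `f` on `[0,1]`. -/
noncomputable def bvNorm (p : ℝ) (f : ℝ → ℂ) : ℝ :=
  supNorm f + (pVar p f 0 1) ^ (1 / p)

namespace BVPaux

open Finset Set


/-- monotonicity along a partition -/
lemma part_le {t : ℕ → ℝ} {m : ℕ} (ht : ∀ j < m, t j < t (j+1)) :
    ∀ {i j : ℕ}, i ≤ j → j ≤ m → t i ≤ t j := by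
  intro i j hij hjm
  induction hij with
  | refl => exact le_rfl
  | @step n hn ih =>
      exact le_trans (ih (by omega)) (le_of_lt (ht n (by omega)))

lemma part_lt {t : ℕ → ℝ} {m : ℕ} (ht : ∀ j < m, t j < t (j+1)) :
    ∀ {i j : ℕ}, i < j → j ≤ m → t i < t j := by
  intro i j hij hjm
  have h1 : t i ≤ t (j - 1) := part_le ht (by omega) (by omega)
  have h2 : t (j - 1) < t (j - 1 + 1) := ht (j-1) (by omega)
  have : j - 1 + 1 = j := by omega
  rw [this] at h2
  exact lt_of_le_of_lt h1 h2

lemma mem_varSums {p : ℝ} {f : ℝ → ℂ} {m : ℕ} {t : ℕ → ℝ}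
    (hm : 0 < m) (h0 : t 0 = 0) (h1 : t m = 1) (ht : ∀ j < m, t j < t (j+1)) :
    (∑ j ∈ Finset.range m, ‖f (t (j + 1)) - f (t j)‖ ^ p) ∈ varSums p f 0 1 :=
  ⟨m, t, hm, h0, h1, ht, rfl⟩

lemma varSums_nonempty (p : ℝ) (f : ℝ → ℂ) : (varSums p f 0 1).Nonempty := by
  refine ⟨_, mem_varSums (m := 1) (t := fun j => if j = 0 then 0 else 1) one_pos rfl rfl ?_⟩
  intro j hj
  interval_cases j
  norm_num

lemma varSums_mem_nonneg {p : ℝ} {f : ℝ → ℂ} {s : ℝ} (hs : s ∈ varSums p f 0 1) : 0 ≤ s := by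
  obtain ⟨m, t, _, _, _, _, rfl⟩ := hs
  exact Finset.sum_nonneg fun j _ => Real.rpow_nonneg (norm_nonneg _) _

lemma pVar_nonneg {p : ℝ} {f : ℝ → ℂ} (hf : BddAbove (varSums p f 0 1)) :
    0 ≤ pVar p f 0 1 := by
  obtain ⟨s, hs⟩ := varSums_nonempty p f
  exact le_trans (varSums_mem_nonneg hs) (le_csSup hf hs)

lemma le_pVar {p : ℝ} {f : ℝ → ℂ} (hf : BddAbove (varSums p f 0 1)) {s : ℝ}
    (hs : s ∈ varSums p f 0 1) : s ≤ pVar p f 0 1 := le_csSup hf hs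

/-- from `|z|^p ≤ V` deduce `|z| ≤ V^(1/p)` -/
lemma abs_le_rpow_inv {p V x : ℝ} (hp : 0 < p) (hx : 0 ≤ x) (h : x ^ p ≤ V) :
    x ≤ V ^ (1/p) := by
  have hV : 0 ≤ V := le_trans (Real.rpow_nonneg hx p) h
  have := Real.rpow_le_rpow (Real.rpow_nonneg hx p) h (by positivity : (0:ℝ) ≤ 1/p)
  rwa [← Real.rpow_mul hx, mul_one_div, div_self (ne_of_gt hp), Real.rpow_one] at this

/-- pointwise bound on `[0,1]` from bounded variation sums -/
lemma abs_le_bound {p : ℝ} (hp : 0 < p) {f : ℝ → ℂ} (hf : BddAbove (varSums p f 0 1)) :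
    ∀ x ∈ Set.Icc (0:ℝ) 1, ‖f x‖ ≤ ‖f 0‖ + (pVar p f 0 1) ^ (1/p) := by
  intro x hx
  obtain ⟨hx0, hx1⟩ := hx
  have hpv : 0 ≤ pVar p f 0 1 := pVar_nonneg hf
  rcases eq_or_lt_of_le hx0 with h0 | h0
  · have : ‖f x‖ = ‖f 0‖ := by rw [← h0]
    rw [this]
    have : (0:ℝ) ≤ (pVar p f 0 1) ^ (1/p) := Real.rpow_nonneg hpv _
    linarith
  · have key : ‖f x - f 0‖ ^ p ≤ pVar p f 0 1 := by
      rcases eq_or_lt_of_le hx1 with h1 | h1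
      · have hmem := mem_varSums (p := p) (f := f) (m := 1)
          (t := fun j => if j = 0 then 0 else 1) one_pos rfl rfl
          (by intro j hj; interval_cases j; norm_num)
        have := le_pVar hf hmem
        simp only [Finset.sum_range_one] at this
        norm_num at this
        rw [h1]
        convert this using 3
      · have hmem := mem_varSums (p := p) (f := f) (m := 2)
          (t := fun j => if j = 0 then 0 else if j = 1 then x else 1) two_pos rfl rfl
          (by intro j hj; interval_cases j <;> norm_num [h0, h1])
        have hle := le_pVar hf hmem
        rw [Finset.sum_range_succ, Finset.sum_range_one] at hle
        norm_num at hle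
        have hnn : (0:ℝ) ≤ ‖f 1 - f x‖ ^ p :=
          Real.rpow_nonneg (norm_nonneg _) _
        linarith
    have h2 : ‖f x - f 0‖ ≤ (pVar p f 0 1) ^ (1/p) :=
      abs_le_rpow_inv hp (norm_nonneg _) key
    have h3 : ‖f x‖ ≤ ‖f 0‖ + ‖f x - f 0‖ := by
      have := norm_add_le (f 0) (f x - f 0)
      simpa using this
    linarith

lemma bddAbove_image {p : ℝ} (hp : 0 < p) {f : ℝ → ℂ} (hf : BddAbove (varSums p f 0 1)) :
    BddAbove ((fun x => ‖f x‖) '' Set.Icc (0:ℝ) 1) := by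
  refine ⟨‖f 0‖ + (pVar p f 0 1) ^ (1/p), ?_⟩
  rintro y ⟨x, hx, rfl⟩
  exact abs_le_bound hp hf x hx

lemma le_supNorm {p : ℝ} (hp : 0 < p) {f : ℝ → ℂ} (hf : BddAbove (varSums p f 0 1))
    {x : ℝ} (hx : x ∈ Set.Icc (0:ℝ) 1) : ‖f x‖ ≤ supNorm f :=
  le_csSup (bddAbove_image hp hf) ⟨x, hx, rfl⟩

lemma supNorm_nonneg {p : ℝ} (hp : 0 < p) {f : ℝ → ℂ} (hf : BddAbove (varSums p f 0 1)) :
    0 ≤ supNorm f :=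
  le_trans (norm_nonneg _) (le_supNorm hp hf (by norm_num : (0:ℝ) ∈ Set.Icc (0:ℝ) 1))

lemma supNorm_le {f : ℝ → ℂ} {B : ℝ} (hB : ∀ x ∈ Set.Icc (0:ℝ) 1, ‖f x‖ ≤ B) :
    supNorm f ≤ B := by
  refine csSup_le ⟨‖f 0‖, ⟨0, by norm_num, rfl⟩⟩ ?_
  rintro y ⟨x, hx, rfl⟩
  exact hB x hx

/-- elementary: (a+b)^p ≤ 2^p (a^p + b^p) -/
lemma add_rpow_le {p a b : ℝ} (hp : 0 ≤ p) (ha : 0 ≤ a) (hb : 0 ≤ b) :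
    (a + b) ^ p ≤ 2 ^ p * (a ^ p + b ^ p) := by
  have hmax : a + b ≤ 2 * max a b := by
    rcases le_total a b with h | h
    · rw [max_eq_right h]; linarith
    · rw [max_eq_left h]; linarith
  have h1 : (a + b) ^ p ≤ (2 * max a b) ^ p :=
    Real.rpow_le_rpow (by linarith) hmax hp
  have h2 : (2 * max a b) ^ p = 2 ^ p * (max a b) ^ p :=
    Real.mul_rpow (by norm_num) (le_max_of_le_left ha)
  have h3 : (max a b) ^ p ≤ a ^ p + b ^ p := by
    rcases le_total a b with h | h
    · rw [max_eq_right h]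
      have := Real.rpow_nonneg ha p
      linarith
    · rw [max_eq_left h]
      have := Real.rpow_nonneg hb p
      linarith
  calc (a + b) ^ p ≤ 2 ^ p * (max a b) ^ p := by rw [← h2]; exact h1
    _ ≤ 2 ^ p * (a ^ p + b ^ p) := by
        have : (0:ℝ) ≤ 2 ^ p := Real.rpow_nonneg (by norm_num) p
        nlinarith

/-- number of strict increases of a non-decreasing ℕ-sequence -/
lemma natsteps (a : ℕ → ℕ) :
    ∀ m : ℕ, (∀ j < m, a j ≤ a (j+1)) →
      a 0 ≤ a m ∧
      ((Finset.range m).filter (fun j => a j < a (j+1))).card ≤ a m - a 0 := by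
  intro m
  induction m with
  | zero => intro _; simp
  | succ n ih =>
      intro hm
      obtain ⟨h0, hcard⟩ := ih (fun j hj => hm j (by omega))
      have hn : a n ≤ a (n+1) := hm n (by omega)
      constructor
      · omega
      · rw [Finset.range_add_one, Finset.filter_insert]
        by_cases hc : a n < a (n+1)
        · rw [if_pos hc, Finset.card_insert_of_notMem (by simp)]
          omega
        · rw [if_neg hc]
          omega

/-- iterate a choice -/
lemma iter_choice {α : Type*} {Q : α → Prop} {r : α → α → Prop}
    (init : ∃ a, Q a) (step : ∀ a, Q a → ∃ b, Q b ∧ r b a) :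
    ∃ z : ℕ → α, (∀ n, Q (z n)) ∧ (∀ n, r (z (n+1)) (z n)) := by
  obtain ⟨a0, ha0⟩ := init
  choose g hg1 hg2 using step
  let st : {a // Q a} → {a // Q a} := fun s => ⟨g s.1 s.2, hg1 s.1 s.2⟩
  let w : ℕ → {a // Q a} := fun n => st^[n] ⟨a0, ha0⟩
  refine ⟨fun n => (w n).1, fun n => (w n).2, fun n => ?_⟩
  show ((w (n+1) : {a // Q a}) : α) |> (r · (w n).1)
  have hw : w (n+1) = st (w n) := Function.iterate_succ_apply' st n ⟨a0, ha0⟩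
  rw [hw]
  exact hg2 _ _


lemma chainfin {p : ℝ} (hp : 0 < p) {Φ : ℝ → ℂ} {B : ℝ}
    (hB : B ∈ upperBounds (varSums p Φ 0 1)) {d : ℝ} (hd : 0 ≤ d)
    (n : ℕ) (w : ℕ → ℝ)
    (hw : ∀ k ≤ n, 0 < w k ∧ w k < 1)
    (hmono : ∀ k < n, w k < w (k+1))
    (hinc : ∀ k < n, d ≤ ‖Φ (w (k+1)) - Φ (w k)‖) :
    (n : ℝ) * d ^ p ≤ B := by
  set t : ℕ → ℝ := fun j => if j = 0 then 0 else if j ≤ n + 1 then w (j - 1) else 1 with ht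
  have h0 : t 0 = 0 := by simp [ht]
  have h1 : t (n + 2) = 1 := by
    simp only [ht]
    rw [if_neg (by omega), if_neg (by omega)]
  have htj : ∀ j, 1 ≤ j → j ≤ n + 1 → t j = w (j - 1) := by
    intro j hj1 hj2
    simp only [ht]
    rw [if_neg (by omega), if_pos (by omega)]
  have hmono' : ∀ j < n + 2, t j < t (j + 1) := by
    intro j hj
    rcases Nat.eq_zero_or_pos j with rfl | hj0
    · rw [h0, htj 1 (by omega) (by omega)]
      exact (hw 0 (by omega)).1
    · rcases Nat.lt_or_ge j (n+1) with hlt | hge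
      · rw [htj j (by omega) (by omega), htj (j+1) (by omega) (by omega)]
        have hme := hmono (j-1) (by omega)
        have e1 : j - 1 + 1 = j := by omega
        rw [e1] at hme
        have e2 : j + 1 - 1 = j := by omega
        rw [e2]
        exact hme
      · have hj' : j = n + 1 := by omega
        subst hj'
        rw [htj (n+1) (by omega) (by omega), h1]
        have e2 : n + 1 - 1 = n := by omega
        rw [e2]
        exact (hw n (by omega)).2
  have hmem := mem_varSums (p := p) (f := Φ) (m := n + 2) (t := t) (by omega) h0 h1 hmono'
  have hsum := hB hmem
  have hlow : (n : ℝ) * d ^ p ≤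
      ∑ j ∈ Finset.range (n+2), ‖Φ (t (j + 1)) - Φ (t j)‖ ^ p := by
    have hsub : Finset.Ico 1 (n+1) ⊆ Finset.range (n+2) := by
      intro j hj
      simp only [Finset.mem_Ico] at hj
      simp only [Finset.mem_range]
      omega
    have hstep : ∀ j ∈ Finset.Ico 1 (n+1),
        d ^ p ≤ ‖Φ (t (j + 1)) - Φ (t j)‖ ^ p := by
      intro j hj
      simp only [Finset.mem_Ico] at hj
      have htj : t j = w (j - 1) := by
        simp only [ht]; rw [if_neg (by omega), if_pos (by omega)]
      have htj1 : t (j+1) = w j := by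
        simp only [ht]; rw [if_neg (by omega), if_pos (by omega)]
        congr 1
      rw [htj, htj1]
      have := hinc (j-1) (by omega)
      have he : j - 1 + 1 = j := by omega
      rw [he] at this
      exact Real.rpow_le_rpow hd this (le_of_lt hp)
    calc (n : ℝ) * d ^ p
        = ∑ _j ∈ Finset.Ico 1 (n+1), d ^ p := by
          rw [Finset.sum_const, Nat.card_Ico]
          have : n + 1 - 1 = n := by omega
          rw [this, nsmul_eq_mul]
      _ ≤ ∑ j ∈ Finset.Ico 1 (n+1), ‖Φ (t (j + 1)) - Φ (t j)‖ ^ p :=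
          Finset.sum_le_sum hstep
      _ ≤ ∑ j ∈ Finset.range (n+2), ‖Φ (t (j + 1)) - Φ (t j)‖ ^ p :=
          Finset.sum_le_sum_of_subset_of_nonneg hsub
            (fun j _ _ => Real.rpow_nonneg (norm_nonneg _) _)
  linarith

lemma side_right {p : ℝ} (hp : 0 < p) {F G : ℝ → ℂ} (hF : BddAbove (varSums p F 0 1))
    {c : ℝ} (hc : 0 < c)
    (hLB : ∀ y ∈ Set.Icc (0:ℝ) 1, c ≤ ‖F y‖ + ‖G y‖)
    {x : ℝ} (hx0 : 0 ≤ x) (hx1 : x < 1) :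
    ∃ r > 0, (∀ y ∈ Set.Ioo x (x + r) ∩ Set.Icc (0:ℝ) 1, c/3 ≤ ‖F y‖) ∨
             (∀ y ∈ Set.Ioo x (x + r) ∩ Set.Icc (0:ℝ) 1, c/3 ≤ ‖G y‖) := by
  by_contra hcon
  push_neg at hcon
  have stepA : ∀ w, x < w → ∃ y, x < y ∧ y < w ∧ y < 1 ∧ ‖F y‖ < c/3 := by
    intro w hw
    have hr : (0:ℝ) < min (w - x) ((1 - x)/2) := by
      apply lt_min <;> linarith
    obtain ⟨⟨y, ⟨⟨hy1, hy2⟩, _⟩, hyF⟩, _⟩ := hcon (min (w - x) ((1 - x)/2)) hr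
    refine ⟨y, hy1, ?_, ?_, hyF⟩
    · have := min_le_left (w - x) ((1 - x)/2); linarith
    · have := min_le_right (w - x) ((1 - x)/2); linarith
  have stepB : ∀ w, x < w → ∃ y, x < y ∧ y < w ∧ y < 1 ∧ 2*c/3 ≤ ‖F y‖ := by
    intro w hw
    have hr : (0:ℝ) < min (w - x) ((1 - x)/2) := by
      apply lt_min <;> linarith
    obtain ⟨_, ⟨y, ⟨⟨hy1, hy2⟩, hyIcc⟩, hyG⟩⟩ := hcon (min (w - x) ((1 - x)/2)) hr
    refine ⟨y, hy1, ?_, ?_, ?_⟩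
    · have := min_le_left (w - x) ((1 - x)/2); linarith
    · have := min_le_right (w - x) ((1 - x)/2); linarith
    · have := hLB y hyIcc; linarith
  set Q : ℝ × ℝ → Prop := fun q =>
    x < q.2 ∧ q.2 < q.1 ∧ q.1 < 1 ∧ 2*c/3 ≤ ‖F q.1‖ ∧ ‖F q.2‖ < c/3
    with hQ
  have init : ∃ q, Q q := by
    obtain ⟨yG, h1, h2, h3, h4⟩ := stepB 1 hx1
    obtain ⟨yF, g1, g2, g3, g4⟩ := stepA yG h1
    exact ⟨(yG, yF), g1, g2, h3, h4, g4⟩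
  have step : ∀ q, Q q → ∃ q', Q q' ∧ q'.1 < q.2 := by
    rintro q ⟨hq1, hq2, hq3, hq4, hq5⟩
    obtain ⟨yG, h1, h2, h3, h4⟩ := stepB q.2 hq1
    obtain ⟨yF, g1, g2, g3, g4⟩ := stepA yG h1
    exact ⟨(yG, yF), ⟨g1, g2, h3, h4, g4⟩, h2⟩
  obtain ⟨z, hzQ, hzlt⟩ := iter_choice init step
  obtain ⟨B, hB⟩ := hF
  have main : ∀ n : ℕ, ((2*n+1 : ℕ) : ℝ) * (c/3) ^ p ≤ B := by
    intro n
    set w : ℕ → ℝ := fun k => if k % 2 = 0 then (z (n - k/2)).2 else (z (n - k/2)).1 with hwdef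
    apply chainfin hp hB (by linarith : (0:ℝ) ≤ c/3) (2*n+1) w
    · intro k _
      have hq := hzQ (n - k/2)
      rw [hQ] at hq
      constructor
      · by_cases hk : k % 2 = 0 <;> simp only [hwdef, hk, if_true, if_false, if_pos, if_neg,
          reduceIte] <;> [skip; skip] <;> linarith [hq.1, hq.2.1]
      · by_cases hk : k % 2 = 0 <;> simp only [hwdef, hk, reduceIte] <;>
          linarith [hq.2.1, hq.2.2.1]
    · intro k hk
      by_cases hke : k % 2 = 0
      · have hk1 : (k+1) % 2 ≠ 0 := by omega
        have hdiv : (k+1)/2 = k/2 := by omega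
        simp only [hwdef, hke, hk1, reduceIte, hdiv]
        exact (hzQ (n - k/2)).2.1
      · have hk1 : (k+1) % 2 = 0 := by omega
        have hdiv : (k+1)/2 = k/2 + 1 := by omega
        simp only [hwdef, hke, hk1, reduceIte, hdiv]
        have hlt := hzlt (n - (k/2 + 1))
        have he : n - (k/2 + 1) + 1 = n - k/2 := by omega
        rw [he] at hlt
        exact hlt
    · intro k hk
      have habs : ∀ a b : ℂ, 2*c/3 ≤ ‖a‖ → ‖b‖ < c/3 →
          c/3 ≤ ‖a - b‖ := by
        intro a b ha hb
        have := abs_norm_sub_norm_le a b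
        have h2 : ‖a‖ - ‖b‖ ≤ |‖a‖ - ‖b‖| := le_abs_self _
        linarith
      have habs' : ∀ a b : ℂ, 2*c/3 ≤ ‖a‖ → ‖b‖ < c/3 →
          c/3 ≤ ‖b - a‖ := by
        intro a b ha hb
        have := habs a b ha hb
        rwa [norm_sub_rev] at this
      by_cases hke : k % 2 = 0
      · have hk1 : (k+1) % 2 ≠ 0 := by omega
        have hdiv : (k+1)/2 = k/2 := by omega
        simp only [hwdef, hke, hk1, reduceIte, hdiv]
        have hq := hzQ (n - k/2)
        exact habs _ _ hq.2.2.2.1 hq.2.2.2.2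
      · have hk1 : (k+1) % 2 = 0 := by omega
        have hdiv : (k+1)/2 = k/2 + 1 := by omega
        simp only [hwdef, hke, hk1, reduceIte, hdiv]
        have hq := hzQ (n - (k/2+1))
        exact habs' _ _ (hzQ (n - k/2)).2.2.2.1 hq.2.2.2.2
  have hcp : (0:ℝ) < (c/3) ^ p := Real.rpow_pos_of_pos (by linarith) p
  obtain ⟨n, hn⟩ := exists_nat_gt (B / (c/3) ^ p)
  have := main n
  have h2 : (B / (c/3)^p) * (c/3)^p < ((n:ℝ)) * (c/3)^p := by
    apply mul_lt_mul_of_pos_right hn hcp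
  rw [div_mul_cancel₀ _ (ne_of_gt hcp)] at h2
  have h3 : ((n:ℝ)) * (c/3)^p ≤ ((2*n+1 : ℕ) : ℝ) * (c/3)^p := by
    apply mul_le_mul_of_nonneg_right _ (le_of_lt hcp)
    push_cast; linarith
  linarith


lemma side_left {p : ℝ} (hp : 0 < p) {F G : ℝ → ℂ} (hF : BddAbove (varSums p F 0 1))
    {c : ℝ} (hc : 0 < c)
    (hLB : ∀ y ∈ Set.Icc (0:ℝ) 1, c ≤ ‖F y‖ + ‖G y‖)
    {x : ℝ} (hx0 : 0 < x) (hx1 : x ≤ 1) :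
    ∃ r > 0, (∀ y ∈ Set.Ioo (x - r) x ∩ Set.Icc (0:ℝ) 1, c/3 ≤ ‖F y‖) ∨
             (∀ y ∈ Set.Ioo (x - r) x ∩ Set.Icc (0:ℝ) 1, c/3 ≤ ‖G y‖) := by
  by_contra hcon
  push_neg at hcon
  have stepA : ∀ w, w < x → ∃ y, y < x ∧ w < y ∧ 0 < y ∧ ‖F y‖ < c/3 := by
    intro w hw
    have hr : (0:ℝ) < min (x - w) (x/2) := by
      apply lt_min <;> linarith
    obtain ⟨⟨y, ⟨⟨hy1, hy2⟩, _⟩, hyF⟩, _⟩ := hcon (min (x - w) (x/2)) hr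
    refine ⟨y, hy2, ?_, ?_, hyF⟩
    · have := min_le_left (x - w) (x/2); linarith
    · have := min_le_right (x - w) (x/2); linarith
  have stepB : ∀ w, w < x → ∃ y, y < x ∧ w < y ∧ 0 < y ∧ 2*c/3 ≤ ‖F y‖ := by
    intro w hw
    have hr : (0:ℝ) < min (x - w) (x/2) := by
      apply lt_min <;> linarith
    obtain ⟨_, ⟨y, ⟨⟨hy1, hy2⟩, hyIcc⟩, hyG⟩⟩ := hcon (min (x - w) (x/2)) hr
    refine ⟨y, hy2, ?_, ?_, ?_⟩
    · have := min_le_left (x - w) (x/2); linarith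
    · have := min_le_right (x - w) (x/2); linarith
    · have := hLB y hyIcc; linarith
  set Q : ℝ × ℝ → Prop := fun q =>
    q.1 < q.2 ∧ q.2 < x ∧ 0 < q.1 ∧ ‖F q.1‖ < c/3 ∧ 2*c/3 ≤ ‖F q.2‖
    with hQ
  have init : ∃ q, Q q := by
    obtain ⟨yF, h1, h2, h3, h4⟩ := stepA 0 hx0
    obtain ⟨yB, g1, g2, g3, g4⟩ := stepB yF h1
    exact ⟨(yF, yB), g2, g1, h3, h4, g4⟩
  have step : ∀ q, Q q → ∃ q', Q q' ∧ q.2 < q'.1 := by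
    rintro q ⟨hq1, hq2, hq3, hq4, hq5⟩
    obtain ⟨yF, h1, h2, h3, h4⟩ := stepA q.2 hq2
    obtain ⟨yB, g1, g2, g3, g4⟩ := stepB yF h1
    exact ⟨(yF, yB), ⟨g2, g1, h3, h4, g4⟩, h2⟩
  obtain ⟨z, hzQ, hzlt⟩ := iter_choice init step
  obtain ⟨B, hB⟩ := hF
  have main : ∀ n : ℕ, ((2*n+1 : ℕ) : ℝ) * (c/3) ^ p ≤ B := by
    intro n
    set w : ℕ → ℝ := fun k => if k % 2 = 0 then (z (k/2)).1 else (z (k/2)).2 with hwdef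
    apply chainfin hp hB (by linarith : (0:ℝ) ≤ c/3) (2*n+1) w
    · intro k _
      have hq := hzQ (k/2)
      rw [hQ] at hq
      constructor
      · by_cases hk : k % 2 = 0 <;> simp only [hwdef, hk, reduceIte] <;>
          linarith [hq.1, hq.2.2.1]
      · by_cases hk : k % 2 = 0 <;> simp only [hwdef, hk, reduceIte] <;>
          linarith [hq.1, hq.2.1, hx1]
    · intro k hk
      by_cases hke : k % 2 = 0
      · have hk1 : (k+1) % 2 ≠ 0 := by omega
        have hdiv : (k+1)/2 = k/2 := by omega
        simp only [hwdef, hke, hk1, reduceIte, hdiv]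
        exact (hzQ (k/2)).1
      · have hk1 : (k+1) % 2 = 0 := by omega
        have hdiv : (k+1)/2 = k/2 + 1 := by omega
        simp only [hwdef, hke, hk1, reduceIte, hdiv]
        exact hzlt (k/2)
    · intro k hk
      have habs : ∀ a b : ℂ, 2*c/3 ≤ ‖a‖ → ‖b‖ < c/3 →
          c/3 ≤ ‖a - b‖ := by
        intro a b ha hb
        have := abs_norm_sub_norm_le a b
        have h2 : ‖a‖ - ‖b‖ ≤ |‖a‖ - ‖b‖| := le_abs_self _
        linarith
      have habs' : ∀ a b : ℂ, 2*c/3 ≤ ‖a‖ → ‖b‖ < c/3 →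
          c/3 ≤ ‖b - a‖ := by
        intro a b ha hb
        have := habs a b ha hb
        rwa [norm_sub_rev] at this
      by_cases hke : k % 2 = 0
      · have hk1 : (k+1) % 2 ≠ 0 := by omega
        have hdiv : (k+1)/2 = k/2 := by omega
        simp only [hwdef, hke, hk1, reduceIte, hdiv]
        have hq := hzQ (k/2)
        exact habs _ _ hq.2.2.2.2 hq.2.2.2.1
      · have hk1 : (k+1) % 2 = 0 := by omega
        have hdiv : (k+1)/2 = k/2 + 1 := by omega
        simp only [hwdef, hke, hk1, reduceIte, hdiv]
        have hq := hzQ (k/2)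
        exact habs' _ _ hq.2.2.2.2 (hzQ (k/2+1)).2.2.2.1
  have hcp : (0:ℝ) < (c/3) ^ p := Real.rpow_pos_of_pos (by linarith) p
  obtain ⟨n, hn⟩ := exists_nat_gt (B / (c/3) ^ p)
  have := main n
  have h2 : (B / (c/3)^p) * (c/3)^p < ((n:ℝ)) * (c/3)^p := by
    apply mul_lt_mul_of_pos_right hn hcp
  rw [div_mul_cancel₀ _ (ne_of_gt hcp)] at h2
  have h3 : ((n:ℝ)) * (c/3)^p ≤ ((2*n+1 : ℕ) : ℝ) * (c/3)^p := by
    apply mul_le_mul_of_nonneg_right _ (le_of_lt hcp)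
    push_cast; linarith
  linarith


lemma goodpart {p : ℝ} (hp : 0 < p) {F G : ℝ → ℂ}
    (hF : BddAbove (varSums p F 0 1))
    {c : ℝ} (hc : 0 < c)
    (hLB : ∀ y ∈ Set.Icc (0:ℝ) 1, c ≤ ‖F y‖ + ‖G y‖) :
    ∃ (N : ℕ) (t : ℕ → ℝ), t 0 = 0 ∧ t N = 1 ∧ (∀ i < N, t i < t (i+1)) ∧
      (∀ i ≤ N, c/3 ≤ ‖F (t i)‖ ∨ c/3 ≤ ‖G (t i)‖) ∧
      (∀ i < N, (∀ y ∈ Set.Ioo (t i) (t (i+1)), c/3 ≤ ‖F y‖) ∨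
                (∀ y ∈ Set.Ioo (t i) (t (i+1)), c/3 ≤ ‖G y‖)) := by
  have hPt : ∀ y ∈ Set.Icc (0:ℝ) 1, c/3 ≤ ‖F y‖ ∨ c/3 ≤ ‖G y‖ := by
    intro y hy
    have h1 := hLB y hy
    by_cases h : c/3 ≤ ‖F y‖
    · exact Or.inl h
    · push_neg at h
      right
      linarith
  set A : Set ℝ := {b | b ∈ Set.Icc (0:ℝ) 1 ∧ ∃ (N : ℕ) (t : ℕ → ℝ),
      t 0 = 0 ∧ t N = b ∧ (∀ i < N, t i < t (i+1)) ∧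
      (∀ i ≤ N, c/3 ≤ ‖F (t i)‖ ∨ c/3 ≤ ‖G (t i)‖) ∧
      (∀ i < N, (∀ y ∈ Set.Ioo (t i) (t (i+1)), c/3 ≤ ‖F y‖) ∨
                (∀ y ∈ Set.Ioo (t i) (t (i+1)), c/3 ≤ ‖G y‖))} with hA
  have h0A : (0:ℝ) ∈ A := by
    refine ⟨⟨le_rfl, zero_le_one⟩, 0, fun _ => 0, rfl, rfl, by omega, ?_, by omega⟩
    intro i _
    exact hPt 0 ⟨le_rfl, zero_le_one⟩
  have hbdd : BddAbove A := ⟨1, fun b hb => hb.1.2⟩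
  set s := sSup A with hs
  have hs0 : 0 ≤ s := le_csSup hbdd h0A
  have hs1 : s ≤ 1 := csSup_le ⟨0, h0A⟩ (fun b hb => hb.1.2)
  have extend : ∀ a ∈ A, ∀ b', a < b' → b' ≤ 1 →
      ((∀ y ∈ Set.Ioo a b', c/3 ≤ ‖F y‖) ∨
       (∀ y ∈ Set.Ioo a b', c/3 ≤ ‖G y‖)) → b' ∈ A := by
    rintro a ⟨⟨ha0, ha1⟩, N, t, ht0, htN, htmono, htpt, htint⟩ b' hab hb1 hgood
    have hb'0 : (0:ℝ) ≤ b' := le_trans ha0 (le_of_lt hab)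
    set u : ℕ → ℝ := fun i => if i ≤ N then t i else b' with hu
    have hui : ∀ i, i ≤ N → u i = t i := by
      intro i hi; simp only [hu]; rw [if_pos hi]
    have huo : ∀ i, ¬(i ≤ N) → u i = b' := by
      intro i hi; simp only [hu]; rw [if_neg hi]
    refine ⟨⟨hb'0, hb1⟩, N+1, u, ?_, ?_, ?_, ?_, ?_⟩
    · rw [hui 0 (by omega)]; exact ht0
    · rw [huo (N+1) (by omega)]
    · intro i hi
      rcases Nat.lt_or_ge i N with h | h
      · rw [hui i (by omega), hui (i+1) (by omega)]; exact htmono i h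
      · have : i = N := by omega
        subst this
        rw [hui i (by omega), huo (i+1) (by omega), htN]
        exact hab
    · intro i hi
      rcases le_or_gt i N with h | h
      · rw [hui i h]; exact htpt i h
      · have : i = N + 1 := by omega
        subst this
        rw [huo (N+1) (by omega)]
        exact hPt b' ⟨hb'0, hb1⟩
    · intro i hi
      rcases Nat.lt_or_ge i N with h | h
      · rw [hui i (by omega), hui (i+1) (by omega)]; exact htint i h
      · have : i = N := by omega
        subst this
        rw [hui i (by omega), huo (i+1) (by omega), htN]
        exact hgood
  have hsA : s ∈ A := by
    rcases eq_or_lt_of_le hs0 with h | h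
    · rw [← h]; exact h0A
    · obtain ⟨r, hr, hgood⟩ := side_left hp hF hc hLB h hs1
      obtain ⟨a, haA, har⟩ := exists_lt_of_lt_csSup ⟨0, h0A⟩ (show s - r < sSup A by rw [← hs]; linarith)
      rcases eq_or_lt_of_le (le_csSup hbdd haA : a ≤ s) with heq | hlt
      · rw [hs, ← heq]; exact haA
      · refine extend a haA s hlt hs1 ?_
        have ha0 : (0:ℝ) ≤ a := haA.1.1
        have hsub : Set.Ioo a s ⊆ Set.Ioo (s - r) s ∩ Set.Icc (0:ℝ) 1 := by
          rintro y ⟨hy1, hy2⟩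
          exact ⟨⟨by linarith, hy2⟩, by linarith, by linarith⟩
        rcases hgood with hg | hg
        · exact Or.inl fun y hy => hg y (hsub hy)
        · exact Or.inr fun y hy => hg y (hsub hy)
  rcases eq_or_lt_of_le hs1 with h1 | h1
  · obtain ⟨_, N, t, ht0, htN, htmono, htpt, htint⟩ := hsA
    rw [h1] at htN
    exact ⟨N, t, ht0, htN, htmono, htpt, htint⟩
  · exfalso
    obtain ⟨r, hr, hgood⟩ := side_right hp hF hc hLB hs0 h1
    set b' := min (s + r/2) 1 with hb'
    have hb's : s < b' := lt_min (by linarith) h1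
    have hb'1 : b' ≤ 1 := min_le_right _ _
    have hb'A : b' ∈ A := by
      refine extend s hsA b' hb's hb'1 ?_
      have hsub : Set.Ioo s b' ⊆ Set.Ioo s (s + r) ∩ Set.Icc (0:ℝ) 1 := by
        rintro y ⟨hy1, hy2⟩
        have := min_le_left (s + r/2) 1
        have := min_le_right (s + r/2) 1
        refine ⟨⟨hy1, by rw [hb'] at hy2; simp at hy2; linarith [hy2.1]⟩, by linarith, ?_⟩
        rw [hb'] at hy2; simp at hy2; linarith [hy2.2]
      rcases hgood with hg | hg
      · exact Or.inl fun y hy => hg y (hsub hy)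
      · exact Or.inr fun y hy => hg y (hsub hy)
    have := le_csSup hbdd hb'A
    rw [← hs] at this
    linarith


noncomputable def iota (t : ℕ → ℝ) (N : ℕ) (x : ℝ) : ℕ :=
  ((Finset.range (N+1)).filter (fun i => t i < x)).card +
  ((Finset.range (N+1)).filter (fun i => t i ≤ x)).card

lemma iota_mono (t : ℕ → ℝ) (N : ℕ) {x y : ℝ} (hxy : x ≤ y) :
    iota t N x ≤ iota t N y := by
  unfold iota
  have h1 : (Finset.range (N+1)).filter (fun i => t i < x) ⊆
      (Finset.range (N+1)).filter (fun i => t i < y) := by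
    intro i hi
    simp only [Finset.mem_filter] at hi ⊢
    exact ⟨hi.1, lt_of_lt_of_le hi.2 hxy⟩
  have h2 : (Finset.range (N+1)).filter (fun i => t i ≤ x) ⊆
      (Finset.range (N+1)).filter (fun i => t i ≤ y) := by
    intro i hi
    simp only [Finset.mem_filter] at hi ⊢
    exact ⟨hi.1, le_trans hi.2 hxy⟩
  have := Finset.card_le_card h1
  have := Finset.card_le_card h2
  omega

lemma iota_le (t : ℕ → ℝ) (N : ℕ) (x : ℝ) : iota t N x ≤ 2*N+2 := by
  unfold iota
  have h1 := Finset.card_filter_le (Finset.range (N+1)) (fun i => t i < x)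
  have h2 := Finset.card_filter_le (Finset.range (N+1)) (fun i => t i ≤ x)
  rw [Finset.card_range] at h1 h2
  omega

lemma iota_pt {t : ℕ → ℝ} {N : ℕ} (htmono : ∀ i < N, t i < t (i+1)) {k : ℕ} (hk : k ≤ N) :
    iota t N (t k) = 2*k+1 := by
  unfold iota
  have e1 : (Finset.range (N+1)).filter (fun i => t i < t k) = Finset.range k := by
    ext i
    simp only [Finset.mem_filter, Finset.mem_range]
    constructor
    · rintro ⟨hi, hlt⟩
      by_contra hcon
      have : t k ≤ t i := part_le htmono (by omega) (by omega)
      linarith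
    · intro hi
      exact ⟨by omega, part_lt htmono hi hk⟩
  have e2 : (Finset.range (N+1)).filter (fun i => t i ≤ t k) = Finset.range (k+1) := by
    ext i
    simp only [Finset.mem_filter, Finset.mem_range]
    constructor
    · rintro ⟨hi, hle⟩
      by_contra hcon
      have : t k < t i := part_lt htmono (by omega) (by omega)
      linarith
    · intro hi
      rcases Nat.lt_or_ge i k with h | h
      · exact ⟨by omega, le_of_lt (part_lt htmono h hk)⟩
      · have : i = k := by omega
        subst this
        exact ⟨by omega, le_rfl⟩
  rw [e1, e2, Finset.card_range, Finset.card_range]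
  omega

lemma iota_int {t : ℕ → ℝ} {N : ℕ} (htmono : ∀ i < N, t i < t (i+1)) {k : ℕ} {x : ℝ}
    (hk : k < N) (hx1 : t k < x) (hx2 : x < t (k+1)) : iota t N x = 2*k+2 := by
  unfold iota
  have key : ∀ i ≤ N, (t i < x ↔ i ≤ k) ∧ (t i ≤ x ↔ i ≤ k) := by
    intro i hi
    rcases le_or_gt i k with h | h
    · have : t i ≤ t k := part_le htmono h (by omega)
      constructor
      · constructor <;> intro <;> [exact h; linarith]
      · constructor <;> intro <;> [exact h; linarith]
    · have : t (k+1) ≤ t i := part_le htmono (by omega) hi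
      constructor
      · constructor
        · intro hh; exfalso; linarith
        · intro hh; omega
      · constructor
        · intro hh; exfalso; linarith
        · intro hh; omega
  have e1 : (Finset.range (N+1)).filter (fun i => t i < x) = Finset.range (k+1) := by
    ext i
    simp only [Finset.mem_filter, Finset.mem_range]
    constructor
    · rintro ⟨hi, hlt⟩
      have := ((key i (by omega)).1).mp hlt
      omega
    · intro hi
      exact ⟨by omega, ((key i (by omega)).1).mpr (by omega)⟩
  have e2 : (Finset.range (N+1)).filter (fun i => t i ≤ x) = Finset.range (k+1) := by
    ext i
    simp only [Finset.mem_filter, Finset.mem_range]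
    constructor
    · rintro ⟨hi, hlt⟩
      have := ((key i (by omega)).2).mp hlt
      omega
    · intro hi
      exact ⟨by omega, ((key i (by omega)).2).mpr (by omega)⟩
  rw [e1, e2, Finset.card_range]
  omega

lemma classify {t : ℕ → ℝ} {N : ℕ} (ht0 : t 0 = 0) (htN : t N = 1)
    (htmono : ∀ i < N, t i < t (i+1)) {x : ℝ} (hx : x ∈ Set.Icc (0:ℝ) 1) :
    (∃ k ≤ N, x = t k) ∨ (∃ k < N, t k < x ∧ x < t (k+1)) := by
  set S := (Finset.range (N+1)).filter (fun i => t i ≤ x) with hS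
  have hSne : S.Nonempty := ⟨0, by
    simp only [hS, Finset.mem_filter, Finset.mem_range]
    exact ⟨by omega, by rw [ht0]; exact hx.1⟩⟩
  obtain ⟨k, hkS, hkmax⟩ : ∃ k, k ∈ S ∧ ∀ j ∈ S, j ≤ k :=
    ⟨S.max' hSne, Finset.max'_mem S hSne, fun j hj => Finset.le_max' S j hj⟩
  have hkN : k ≤ N := by
    have := (Finset.mem_filter.mp hkS).1
    simp only [Finset.mem_range] at this
    omega
  have hkx : t k ≤ x := (Finset.mem_filter.mp hkS).2
  rcases eq_or_lt_of_le hkx with he | hlt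
  · exact Or.inl ⟨k, hkN, he.symm⟩
  · have hkN' : k < N := by
      by_contra hcon
      have : k = N := by omega
      subst this
      rw [htN] at hlt
      have := hx.2
      linarith
    refine Or.inr ⟨k, hkN', hlt, ?_⟩
    by_contra hcon
    push_neg at hcon
    have : k + 1 ∈ S := by
      simp only [hS, Finset.mem_filter, Finset.mem_range]
      exact ⟨by omega, hcon⟩
    have := hkmax (k+1) this
    omega


noncomputable def corrC (p c3 MD VD : ℝ) (K : ℕ) : ℝ :=
  2^p * (1/(c3*c3))^p * (MD^p + VD) + K * (1/c3)^p

noncomputable def corrK (p c3 MD VD : ℝ) (K : ℕ) : ℝ :=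
  1/c3 + (corrC p c3 MD VD K)^(1/p)

lemma corrC_nonneg {p c3 MD VD : ℝ} (hc3 : 0 < c3) (hMD : 0 ≤ MD) (hVD : 0 ≤ VD) (K : ℕ) :
    0 ≤ corrC p c3 MD VD K := by
  unfold corrC
  have h1 : (0:ℝ) ≤ 2^p := Real.rpow_nonneg (by norm_num) _
  have h2 : (0:ℝ) ≤ (1/(c3*c3))^p := Real.rpow_nonneg (by positivity) _
  have h3 : (0:ℝ) ≤ MD^p := Real.rpow_nonneg hMD _
  have h4 : (0:ℝ) ≤ (1/c3)^p := Real.rpow_nonneg (by positivity) _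
  have h5 : (0:ℝ) ≤ (K:ℝ) := Nat.cast_nonneg _
  positivity

lemma corrK_nonneg {p c3 MD VD : ℝ} (hc3 : 0 < c3) (hMD : 0 ≤ MD) (hVD : 0 ≤ VD) (K : ℕ) :
    0 ≤ corrK p c3 MD VD K := by
  unfold corrK
  have h1 : (0:ℝ) ≤ (corrC p c3 MD VD K)^(1/p) :=
    Real.rpow_nonneg (corrC_nonneg hc3 hMD hVD K) _
  positivity

open Classical in
lemma correction {p : ℝ} (hp : 1 ≤ p) (h D : ℝ → ℂ)
    (hD : BddAbove (varSums p D 0 1)) (hh : BddAbove (varSums p h 0 1))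
    (π : ℝ → Prop) (ι : ℝ → ℕ) (K : ℕ)
    (hι : ∀ x y : ℝ, x ≤ y → ι x ≤ ι y)
    (hιbd : ∀ x : ℝ, ι x ≤ K)
    (hcell : ∀ x y, x ∈ Set.Icc (0:ℝ) 1 → y ∈ Set.Icc (0:ℝ) 1 → ι x = ι y → (π x ↔ π y))
    {c3 : ℝ} (hc3 : 0 < c3)
    (hDlow : ∀ x ∈ Set.Icc (0:ℝ) 1, π x → c3 ≤ ‖D x‖)
    {β : ℝ} (hβ : 0 ≤ β)
    (hhM : ∀ x ∈ Set.Icc (0:ℝ) 1, ‖h x‖ ≤ β)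
    (hVh : pVar p h 0 1 ≤ β ^ p)
    (v : ℝ → ℂ)
    (hvpos : ∀ x ∈ Set.Icc (0:ℝ) 1, π x → v x = h x / D x)
    (hvneg : ∀ x, ¬ π x → v x = 0) :
    BddAbove (varSums p v 0 1) ∧
    bvNorm p v ≤
      β * corrK p c3 (‖D 0‖ + (pVar p D 0 1) ^ (1/p)) (pVar p D 0 1) K := by
  have hp0 : (0:ℝ) < p := lt_of_lt_of_le one_pos hp
  set MD : ℝ := ‖D 0‖ + (pVar p D 0 1) ^ (1/p) with hMD
  set VD : ℝ := pVar p D 0 1 with hVD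
  have hVDnn : 0 ≤ VD := pVar_nonneg hD
  have hMDnn : 0 ≤ MD := by
    have := norm_nonneg (D 0)
    have := Real.rpow_nonneg hVDnn (1/p)
    rw [hMD]
    linarith
  have hMDle : ∀ x ∈ Set.Icc (0:ℝ) 1, ‖D x‖ ≤ MD := abs_le_bound hp0 hD
  have hCnn : 0 ≤ corrC p c3 MD VD K := corrC_nonneg hc3 hMDnn hVDnn K
  have hvabs : ∀ x ∈ Set.Icc (0:ℝ) 1, ‖v x‖ ≤ β * (1/c3) := by
    intro x hx
    by_cases hπx : π x
    · rw [hvpos x hx hπx, norm_div]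
      rw [mul_one_div]
      exact div_le_div₀ hβ (hhM x hx) hc3 (hDlow x hx hπx)
    · rw [hvneg x hπx]
      simp only [norm_zero]
      positivity
  have hkey : ∀ s ∈ varSums p v 0 1, s ≤ β^p * corrC p c3 MD VD K := by
    rintro s ⟨m, u, hm, hu0, hu1, humono, rfl⟩
    have huIcc : ∀ j ≤ m, u j ∈ Set.Icc (0:ℝ) 1 := by
      intro j hj
      constructor
      · rw [← hu0]; exact part_le humono (by omega) hj
      · rw [← hu1]; exact part_le humono hj le_rfl
    have hterm : ∀ j < m, ‖v (u (j+1)) - v (u j)‖ ^ p ≤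
        2^p * (1/(c3*c3))^p * (MD^p * ‖h (u (j+1)) - h (u j)‖^p
          + β^p * ‖D (u (j+1)) - D (u j)‖^p)
        + (if ι (u j) < ι (u (j+1)) then β^p * (1/c3)^p else 0) := by
      intro j hj
      have hx := huIcc j (le_of_lt hj)
      have hy := huIcc (j+1) hj
      have hxy : u j ≤ u (j+1) := le_of_lt (humono j hj)
      set x := u j
      set y := u (j+1)
      have hnn1 : (0:ℝ) ≤ 2^p * (1/(c3*c3))^p * (MD^p * ‖h y - h x‖^p
          + β^p * ‖D y - D x‖^p) := by
        have h1 : (0:ℝ) ≤ 2^p := Real.rpow_nonneg (by norm_num) _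
        have h2 : (0:ℝ) ≤ (1/(c3*c3))^p := Real.rpow_nonneg (by positivity) _
        have h3 : (0:ℝ) ≤ MD^p := Real.rpow_nonneg hMDnn _
        have h4 : (0:ℝ) ≤ β^p := Real.rpow_nonneg hβ _
        have h5 : (0:ℝ) ≤ ‖h y - h x‖^p :=
          Real.rpow_nonneg (norm_nonneg _) _
        have h6 : (0:ℝ) ≤ ‖D y - D x‖^p :=
          Real.rpow_nonneg (norm_nonneg _) _
        positivity
      by_cases hπx : π x <;> by_cases hπy : π y
      · -- both
        have hDx := hDlow x hx hπx
        have hDy := hDlow y hy hπy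
        have hDx0 : D x ≠ 0 := by
          intro hz
          rw [hz] at hDx
          simp only [norm_zero] at hDx
          linarith
        have hDy0 : D y ≠ 0 := by
          intro hz
          rw [hz] at hDy
          simp only [norm_zero] at hDy
          linarith
        rw [hvpos x hx hπx, hvpos y hy hπy]
        have heq : h y / D y - h x / D x = ((h y - h x) * D x + h x * (D x - D y)) / (D y * D x) := by
          field_simp
          ring
        have habs : ‖h y / D y - h x / D x‖ ≤
            (MD * ‖h y - h x‖ + β * ‖D y - D x‖) * (1/(c3*c3)) := by
          rw [heq, norm_div, norm_mul]
          rw [mul_one_div]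
          apply div_le_div₀
          · have h1 : (0:ℝ) ≤ MD * ‖h y - h x‖ :=
              mul_nonneg hMDnn (norm_nonneg _)
            have h2 : (0:ℝ) ≤ β * ‖D y - D x‖ :=
              mul_nonneg hβ (norm_nonneg _)
            linarith
          · calc ‖(h y - h x) * D x + h x * (D x - D y)‖
                ≤ ‖(h y - h x) * D x‖ + ‖h x * (D x - D y)‖ :=
                  norm_add_le _ _
              _ = ‖h y - h x‖ * ‖D x‖
                  + ‖h x‖ * ‖D x - D y‖ := by rw [norm_mul, norm_mul]
              _ ≤ MD * ‖h y - h x‖ + β * ‖D y - D x‖ := by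
                  have e1 : ‖D x - D y‖ = ‖D y - D x‖ :=
                    norm_sub_rev _ _
                  rw [e1]
                  have b1 := hMDle x hx
                  have b2 := hhM x hx
                  have n1 := norm_nonneg (h y - h x)
                  have n2 := norm_nonneg (D y - D x)
                  nlinarith
          · positivity
          · exact mul_le_mul hDy hDx (le_of_lt hc3) (norm_nonneg _)
        have hfin : ‖h y / D y - h x / D x‖ ^ p ≤
            2^p * (1/(c3*c3))^p * (MD^p * ‖h y - h x‖^p
              + β^p * ‖D y - D x‖^p) := by
          have step1 : ‖h y / D y - h x / D x‖ ^ p ≤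
              ((MD * ‖h y - h x‖ + β * ‖D y - D x‖) * (1/(c3*c3))) ^ p :=
            Real.rpow_le_rpow (norm_nonneg _) habs (le_of_lt hp0)
          have h1 : (0:ℝ) ≤ MD * ‖h y - h x‖ :=
            mul_nonneg hMDnn (norm_nonneg _)
          have h2 : (0:ℝ) ≤ β * ‖D y - D x‖ :=
            mul_nonneg hβ (norm_nonneg _)
          have step2 : ((MD * ‖h y - h x‖ + β * ‖D y - D x‖) * (1/(c3*c3))) ^ p
              = (MD * ‖h y - h x‖ + β * ‖D y - D x‖) ^ p * (1/(c3*c3))^p :=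
            Real.mul_rpow (by linarith) (by positivity)
          have step3 : (MD * ‖h y - h x‖ + β * ‖D y - D x‖) ^ p ≤
              2^p * ((MD * ‖h y - h x‖)^p + (β * ‖D y - D x‖)^p) :=
            add_rpow_le (le_of_lt hp0) h1 h2
          have e1 : (MD * ‖h y - h x‖)^p = MD^p * ‖h y - h x‖^p :=
            Real.mul_rpow hMDnn (norm_nonneg _)
          have e2 : (β * ‖D y - D x‖)^p = β^p * ‖D y - D x‖^p :=
            Real.mul_rpow hβ (norm_nonneg _)
          have hiv : (0:ℝ) ≤ (1/(c3*c3))^p := Real.rpow_nonneg (by positivity) _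
          calc ‖h y / D y - h x / D x‖ ^ p
              ≤ ((MD * ‖h y - h x‖ + β * ‖D y - D x‖) * (1/(c3*c3))) ^ p := step1
            _ = (MD * ‖h y - h x‖ + β * ‖D y - D x‖) ^ p * (1/(c3*c3))^p := step2
            _ ≤ (2^p * ((MD * ‖h y - h x‖)^p + (β * ‖D y - D x‖)^p)) * (1/(c3*c3))^p :=
                mul_le_mul_of_nonneg_right step3 hiv
            _ = 2^p * (1/(c3*c3))^p * (MD^p * ‖h y - h x‖^p
                  + β^p * ‖D y - D x‖^p) := by rw [e1, e2]; ring
        have hif : (0:ℝ) ≤ (if ι x < ι y then β^p * (1/c3)^p else 0) := by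
          split
          · have h4 : (0:ℝ) ≤ β^p := Real.rpow_nonneg hβ _
            have h5 : (0:ℝ) ≤ (1/c3)^p := Real.rpow_nonneg (by positivity) _
            positivity
          · exact le_refl 0
        linarith
      · -- π x, ¬ π y : mixed
        have hne : ι x ≠ ι y := by
          intro he
          exact hπy ((hcell x y hx hy he).mp hπx)
        have hlt : ι x < ι y := lt_of_le_of_ne (hι x y hxy) hne
        rw [if_pos hlt]
        have hvy : v y = 0 := hvneg y hπy
        have hb : ‖v y - v x‖ ≤ β * (1/c3) := by
          rw [hvy, zero_sub, norm_neg]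
          exact hvabs x hx
        have : ‖v y - v x‖ ^ p ≤ (β * (1/c3)) ^ p :=
          Real.rpow_le_rpow (norm_nonneg _) hb (le_of_lt hp0)
        have e : (β * (1/c3)) ^ p = β^p * (1/c3)^p := Real.mul_rpow hβ (by positivity)
        rw [e] at this
        linarith
      · -- ¬ π x, π y
        have hne : ι x ≠ ι y := by
          intro he
          exact hπx ((hcell x y hx hy he).mpr hπy)
        have hlt : ι x < ι y := lt_of_le_of_ne (hι x y hxy) hne
        rw [if_pos hlt]
        have hvx : v x = 0 := hvneg x hπx
        have hb : ‖v y - v x‖ ≤ β * (1/c3) := by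
          rw [hvx, sub_zero]
          exact hvabs y hy
        have h2 : ‖v y - v x‖ ^ p ≤ (β * (1/c3)) ^ p :=
          Real.rpow_le_rpow (norm_nonneg _) hb (le_of_lt hp0)
        have e : (β * (1/c3)) ^ p = β^p * (1/c3)^p := Real.mul_rpow hβ (by positivity)
        rw [e] at h2
        linarith
      · -- neither
        rw [hvneg x hπx, hvneg y hπy]
        simp only [sub_zero, norm_zero]
        rw [Real.zero_rpow (ne_of_gt hp0)]
        have hif : (0:ℝ) ≤ (if ι x < ι y then β^p * (1/c3)^p else 0) := by
          split
          · have h4 : (0:ℝ) ≤ β^p := Real.rpow_nonneg hβ _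
            have h5 : (0:ℝ) ≤ (1/c3)^p := Real.rpow_nonneg (by positivity) _
            positivity
          · exact le_refl 0
        linarith
    have hsum1 : ∑ j ∈ Finset.range m, ‖v (u (j+1)) - v (u j)‖ ^ p ≤
        ∑ j ∈ Finset.range m, ((2:ℝ)^p * (1/(c3*c3))^p * (MD^p * ‖h (u (j+1)) - h (u j)‖^p
          + β^p * ‖D (u (j+1)) - D (u j)‖^p))
        + ∑ j ∈ Finset.range m, (if ι (u j) < ι (u (j+1)) then β^p * (1/c3)^p else 0) := by
      rw [← Finset.sum_add_distrib]
      exact Finset.sum_le_sum (fun j hj => hterm j (Finset.mem_range.mp hj))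
    have hSh : ∑ j ∈ Finset.range m, ‖h (u (j+1)) - h (u j)‖^p ≤ β^p :=
      le_trans (le_pVar hh (mem_varSums hm hu0 hu1 humono)) hVh
    have hSD : ∑ j ∈ Finset.range m, ‖D (u (j+1)) - D (u j)‖^p ≤ VD :=
      le_pVar hD (mem_varSums hm hu0 hu1 humono)
    have hAnn : (0:ℝ) ≤ 2^p * (1/(c3*c3))^p := by
      have h1 : (0:ℝ) ≤ (2:ℝ)^p := Real.rpow_nonneg (by norm_num) _
      have h2 : (0:ℝ) ≤ (1/(c3*c3))^p := Real.rpow_nonneg (by positivity) _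
      positivity
    have hβp : (0:ℝ) ≤ β^p := Real.rpow_nonneg hβ _
    have hMDp : (0:ℝ) ≤ MD^p := Real.rpow_nonneg hMDnn _
    have hc3p : (0:ℝ) ≤ (1/c3)^p := Real.rpow_nonneg (by positivity) _
    have hmain : ∑ j ∈ Finset.range m, ((2:ℝ)^p * (1/(c3*c3))^p
          * (MD^p * ‖h (u (j+1)) - h (u j)‖^p
            + β^p * ‖D (u (j+1)) - D (u j)‖^p))
        ≤ 2^p * (1/(c3*c3))^p * (MD^p * β^p + β^p * VD) := by
      rw [← Finset.mul_sum]
      apply mul_le_mul_of_nonneg_left _ hAnn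
      rw [Finset.sum_add_distrib, ← Finset.mul_sum, ← Finset.mul_sum]
      exact add_le_add (mul_le_mul_of_nonneg_left hSh hMDp)
        (mul_le_mul_of_nonneg_left hSD hβp)
    have hite : ∑ j ∈ Finset.range m, (if ι (u j) < ι (u (j+1)) then β^p * (1/c3)^p else 0)
        ≤ (K : ℝ) * (β^p * (1/c3)^p) := by
      rw [Finset.sum_ite, Finset.sum_const, Finset.sum_const_zero, add_zero, nsmul_eq_mul]
      have hcard := (natsteps (fun j => ι (u j)) m
        (fun j hj => hι _ _ (le_of_lt (humono j hj)))).2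
      have hbd : ι (u m) ≤ K := hιbd (u m)
      have hcK : ((Finset.range m).filter (fun j => ι (u j) < ι (u (j+1)))).card ≤ K := by
        omega
      have hnn : (0:ℝ) ≤ β^p * (1/c3)^p := mul_nonneg hβp hc3p
      exact mul_le_mul_of_nonneg_right (by exact_mod_cast hcK) hnn
    have hfin : ∑ j ∈ Finset.range m, ‖v (u (j+1)) - v (u j)‖ ^ p ≤
        2^p * (1/(c3*c3))^p * (MD^p * β^p + β^p * VD) + (K : ℝ) * (β^p * (1/c3)^p) := by
      linarith
    calc ∑ j ∈ Finset.range m, ‖v (u (j+1)) - v (u j)‖ ^ p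
        ≤ 2^p * (1/(c3*c3))^p * (MD^p * β^p + β^p * VD) + (K : ℝ) * (β^p * (1/c3)^p) := hfin
      _ = β^p * corrC p c3 MD VD K := by unfold corrC; ring
  have hbdd : BddAbove (varSums p v 0 1) := ⟨_, fun s hs => hkey s hs⟩
  refine ⟨hbdd, ?_⟩
  have hpv : pVar p v 0 1 ≤ β^p * corrC p c3 MD VD K := csSup_le (varSums_nonempty p v) hkey
  have hpvnn : 0 ≤ pVar p v 0 1 := pVar_nonneg hbdd
  have hsup : supNorm v ≤ β * (1/c3) := supNorm_le hvabs
  have h2 : (pVar p v 0 1)^(1/p) ≤ (β^p * corrC p c3 MD VD K)^(1/p) :=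
    Real.rpow_le_rpow hpvnn hpv (by positivity)
  have h3 : (β^p * corrC p c3 MD VD K)^(1/p) = β * (corrC p c3 MD VD K)^(1/p) := by
    rw [Real.mul_rpow (Real.rpow_nonneg hβ p) hCnn]
    congr 1
    rw [← Real.rpow_mul hβ, mul_one_div, div_self (ne_of_gt hp0), Real.rpow_one]
  have hgoal : bvNorm p v ≤ β * (1/c3) + β * (corrC p c3 MD VD K)^(1/p) := by
    unfold bvNorm
    rw [h3] at h2
    linarith
  calc bvNorm p v ≤ β * (1/c3) + β * (corrC p c3 MD VD K)^(1/p) := hgoal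
    _ = β * corrK p c3 MD VD K := by unfold corrK; ring


lemma bdd_add {p : ℝ} (hp : 0 < p) (a b : ℝ → ℂ)
    (ha : BddAbove (varSums p a 0 1)) (hb : BddAbove (varSums p b 0 1)) :
    BddAbove (varSums p (fun x => a x + b x) 0 1) := by
  refine ⟨2^p * (pVar p a 0 1 + pVar p b 0 1), ?_⟩
  rintro s ⟨m, u, hm, hu0, hu1, humono, rfl⟩
  have hterm : ∀ j ∈ Finset.range m,
      ‖(a (u (j+1)) + b (u (j+1))) - (a (u j) + b (u j))‖ ^ p ≤
      2^p * (‖a (u (j+1)) - a (u j)‖^p + ‖b (u (j+1)) - b (u j)‖^p) := by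
    intro j _
    have e : a (u (j+1)) + b (u (j+1)) - (a (u j) + b (u j))
        = (a (u (j+1)) - a (u j)) + (b (u (j+1)) - b (u j)) := by ring
    have h1 : ‖(a (u (j+1)) + b (u (j+1))) - (a (u j) + b (u j))‖ ≤
        ‖a (u (j+1)) - a (u j)‖ + ‖b (u (j+1)) - b (u j)‖ := by
      rw [e]
      exact norm_add_le _ _
    calc ‖(a (u (j+1)) + b (u (j+1))) - (a (u j) + b (u j))‖ ^ p
        ≤ (‖a (u (j+1)) - a (u j)‖ + ‖b (u (j+1)) - b (u j)‖) ^ p :=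
          Real.rpow_le_rpow (norm_nonneg _) h1 (le_of_lt hp)
      _ ≤ 2^p * (‖a (u (j+1)) - a (u j)‖^p + ‖b (u (j+1)) - b (u j)‖^p) :=
          add_rpow_le (le_of_lt hp) (norm_nonneg _) (norm_nonneg _)
  have hSa : ∑ j ∈ Finset.range m, ‖a (u (j+1)) - a (u j)‖^p ≤ pVar p a 0 1 :=
    le_pVar ha (mem_varSums hm hu0 hu1 humono)
  have hSb : ∑ j ∈ Finset.range m, ‖b (u (j+1)) - b (u j)‖^p ≤ pVar p b 0 1 :=
    le_pVar hb (mem_varSums hm hu0 hu1 humono)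
  have h2p : (0:ℝ) ≤ 2^p := Real.rpow_nonneg (by norm_num) _
  calc ∑ j ∈ Finset.range m, ‖(fun x => a x + b x) (u (j+1)) - (fun x => a x + b x) (u j)‖ ^ p
      ≤ ∑ j ∈ Finset.range m, 2^p * (‖a (u (j+1)) - a (u j)‖^p
          + ‖b (u (j+1)) - b (u j)‖^p) := Finset.sum_le_sum hterm
    _ = 2^p * (∑ j ∈ Finset.range m, ‖a (u (j+1)) - a (u j)‖^p
          + ∑ j ∈ Finset.range m, ‖b (u (j+1)) - b (u j)‖^p) := by
        rw [← Finset.mul_sum, Finset.sum_add_distrib]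
    _ ≤ 2^p * (pVar p a 0 1 + pVar p b 0 1) :=
        mul_le_mul_of_nonneg_left (add_le_add hSa hSb) h2p

end BVPaux

theorem stmt19 (p : ℝ) (hp : 1 ≤ p) (F G : ℝ → ℂ)
    (hF : BddAbove (varSums p F 0 1)) (hG : BddAbove (varSums p G 0 1))
    (hnondeg : 0 < sInf ((fun x => ‖F x‖ + ‖G x‖) '' Set.Icc (0:ℝ) 1)) :
    ∀ ε > 0, ∃ δ > 0, ∀ h : ℝ → ℂ, BddAbove (varSums p h 0 1) → bvNorm p h < δ →
      ∃ f g : ℝ → ℂ, BddAbove (varSums p f 0 1) ∧ BddAbove (varSums p g 0 1) ∧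
        (∀ x ∈ Set.Icc (0:ℝ) 1, f x * g x = F x * G x + h x) ∧
        bvNorm p (fun x => f x - F x) < ε ∧ bvNorm p (fun x => g x - G x) < ε := by
  classical
  intro ε hε
  have hp0 : (0:ℝ) < p := lt_of_lt_of_le one_pos hp
  set c := sInf ((fun x => ‖F x‖ + ‖G x‖) '' Set.Icc (0:ℝ) 1) with hcdef
  have hc0 : 0 < c := hnondeg
  have hLB : ∀ y ∈ Set.Icc (0:ℝ) 1, c ≤ ‖F y‖ + ‖G y‖ := by
    intro y hy
    apply csInf_le
    · refine ⟨0, ?_⟩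
      rintro z ⟨w, hw, rfl⟩
      positivity
    · exact ⟨y, hy, rfl⟩
  obtain ⟨N, t, ht0, htN, htmono, htpt, htint⟩ := BVPaux.goodpart hp0 hF hc0 hLB
  have hc3 : (0:ℝ) < c/3 := by linarith
  set ι : ℝ → ℕ := BVPaux.iota t N with hιdef
  set π : ℝ → Prop := fun x => ∀ y ∈ Set.Icc (0:ℝ) 1, ι y = ι x → c/3 ≤ ‖F y‖
    with hπdef
  have hι_mono : ∀ x y : ℝ, x ≤ y → ι x ≤ ι y := fun x y hxy => BVPaux.iota_mono t N hxy
  have hι_bd : ∀ x : ℝ, ι x ≤ 2*N+2 := fun x => BVPaux.iota_le t N x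
  have hcell : ∀ x y, x ∈ Set.Icc (0:ℝ) 1 → y ∈ Set.Icc (0:ℝ) 1 → ι x = ι y → (π x ↔ π y) := by
    intro x y hx hy he
    simp only [hπdef]
    constructor
    · intro hall z hz hze
      exact hall z hz (hze.trans he.symm)
    · intro hall z hz hze
      exact hall z hz (hze.trans he)
  have hcell' : ∀ x y, x ∈ Set.Icc (0:ℝ) 1 → y ∈ Set.Icc (0:ℝ) 1 → ι x = ι y →
      ((¬ π x) ↔ (¬ π y)) := fun x y hx hy he => not_congr (hcell x y hx hy he)
  have hFlow : ∀ x ∈ Set.Icc (0:ℝ) 1, π x → c/3 ≤ ‖F x‖ :=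
    fun x hx hπx => hπx x hx rfl
  have hGlow : ∀ x ∈ Set.Icc (0:ℝ) 1, ¬ π x → c/3 ≤ ‖G x‖ := by
    intro x hx hnx
    rcases BVPaux.classify ht0 htN htmono hx with ⟨k, hk, rfl⟩ | ⟨k, hk, hk1, hk2⟩
    · rcases htpt k hk with hFk | hGk
      · exfalso
        apply hnx
        intro y hy hyι
        have hιk : ι (t k) = 2*k+1 := BVPaux.iota_pt htmono hk
        rcases BVPaux.classify ht0 htN htmono hy with ⟨k', hk', rfl⟩ | ⟨k', hk', h1', h2'⟩
        · have hιk' : ι (t k') = 2*k'+1 := BVPaux.iota_pt htmono hk'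
          have : k' = k := by omega
          subst this
          exact hFk
        · have hιy : ι y = 2*k'+2 := BVPaux.iota_int htmono hk' h1' h2'
          omega
      · exact hGk
    · rcases htint k hk with hFk | hGk
      · exfalso
        apply hnx
        intro y hy hyι
        have hιx : ι x = 2*k+2 := BVPaux.iota_int htmono hk hk1 hk2
        rcases BVPaux.classify ht0 htN htmono hy with ⟨k', hk', rfl⟩ | ⟨k', hk', h1', h2'⟩
        · have hιk' : ι (t k') = 2*k'+1 := BVPaux.iota_pt htmono hk'
          omega
        · have hιy : ι y = 2*k'+2 := BVPaux.iota_int htmono hk' h1' h2'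
          have : k' = k := by omega
          subst this
          exact hFk y ⟨h1', h2'⟩
      · exact hGk x ⟨hk1, hk2⟩
  set MF : ℝ := ‖F 0‖ + (pVar p F 0 1)^(1/p) with hMFdef
  set MG : ℝ := ‖G 0‖ + (pVar p G 0 1)^(1/p) with hMGdef
  have hVFnn : 0 ≤ pVar p F 0 1 := BVPaux.pVar_nonneg hF
  have hVGnn : 0 ≤ pVar p G 0 1 := BVPaux.pVar_nonneg hG
  have hMFnn : 0 ≤ MF := by
    have := norm_nonneg (F 0)
    have := Real.rpow_nonneg hVFnn (1/p)
    rw [hMFdef]; linarith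
  have hMGnn : 0 ≤ MG := by
    have := norm_nonneg (G 0)
    have := Real.rpow_nonneg hVGnn (1/p)
    rw [hMGdef]; linarith
  set KF : ℝ := BVPaux.corrK p (c/3) MG (pVar p G 0 1) (2*N+2) with hKFdef
  set KG : ℝ := BVPaux.corrK p (c/3) MF (pVar p F 0 1) (2*N+2) with hKGdef
  have hKFnn : 0 ≤ KF := BVPaux.corrK_nonneg hc3 hMGnn hVGnn _
  have hKGnn : 0 ≤ KG := BVPaux.corrK_nonneg hc3 hMFnn hVFnn _
  have hden : (0:ℝ) < KF + KG + 1 := by linarith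
  refine ⟨ε / (KF + KG + 1), by positivity, ?_⟩
  intro h hh hhb
  set β := bvNorm p h with hβdef
  have hsupnn : 0 ≤ supNorm h := BVPaux.supNorm_nonneg hp0 hh
  have hpvhnn : 0 ≤ pVar p h 0 1 := BVPaux.pVar_nonneg hh
  have hpvh1p : 0 ≤ (pVar p h 0 1)^(1/p) := Real.rpow_nonneg hpvhnn _
  have hβnn : 0 ≤ β := by rw [hβdef]; unfold bvNorm; linarith
  have hhM : ∀ x ∈ Set.Icc (0:ℝ) 1, ‖h x‖ ≤ β := by
    intro x hx
    have := BVPaux.le_supNorm hp0 hh hx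
    rw [hβdef]; unfold bvNorm; linarith
  have hVh : pVar p h 0 1 ≤ β^p := by
    have h1 : (pVar p h 0 1)^(1/p) ≤ β := by
      rw [hβdef]; unfold bvNorm; linarith
    have h2 : ((pVar p h 0 1)^(1/p))^p ≤ β^p :=
      Real.rpow_le_rpow hpvh1p h1 (le_of_lt hp0)
    rwa [← Real.rpow_mul hpvhnn, one_div, inv_mul_cancel₀ (ne_of_gt hp0), Real.rpow_one] at h2
  set v : ℝ → ℂ := fun x => if x ∈ Set.Icc (0:ℝ) 1 ∧ ¬ π x then h x / G x else 0 with hvdef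
  set w : ℝ → ℂ := fun x => if x ∈ Set.Icc (0:ℝ) 1 ∧ π x then h x / F x else 0 with hwdef
  have hvpos : ∀ x ∈ Set.Icc (0:ℝ) 1, ¬ π x → v x = h x / G x := by
    intro x hx hπx
    rw [hvdef]
    simp only
    rw [if_pos ⟨hx, hπx⟩]
  have hvneg : ∀ x, ¬ ¬ π x → v x = 0 := by
    intro x hπx
    rw [hvdef]
    simp only
    rw [if_neg (fun hcon => hπx hcon.2)]
  have hwpos : ∀ x ∈ Set.Icc (0:ℝ) 1, π x → w x = h x / F x := by
    intro x hx hπx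
    rw [hwdef]
    simp only
    rw [if_pos ⟨hx, hπx⟩]
  have hwneg : ∀ x, ¬ π x → w x = 0 := by
    intro x hπx
    rw [hwdef]
    simp only
    rw [if_neg (fun hcon => hπx hcon.2)]
  obtain ⟨hbddv, hbvv⟩ := BVPaux.correction hp h G hG hh (fun x => ¬ π x) ι (2*N+2)
    hι_mono hι_bd hcell' hc3 hGlow hβnn hhM hVh v hvpos hvneg
  obtain ⟨hbddu, hbvu⟩ := BVPaux.correction hp h F hF hh π ι (2*N+2)
    hι_mono hι_bd hcell hc3 hFlow hβnn hhM hVh w hwpos hwneg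
  have hβδ : β < ε / (KF + KG + 1) := hhb
  have hbound : ∀ KK : ℝ, 0 ≤ KK → KK ≤ KF + KG → β * KK < ε := by
    intro KK hKK1 hKK2
    have h1 : β * KK ≤ β * (KF + KG) := mul_le_mul_of_nonneg_left hKK2 hβnn
    have h2 : β * (KF + KG) < (ε / (KF + KG + 1)) * (KF + KG + 1) := by
      rcases eq_or_lt_of_le (by linarith : (0:ℝ) ≤ KF + KG) with he | hlt
      · rw [← he]
        have : (0:ℝ) < ε / (KF + KG + 1) := by positivity
        nlinarith
      · calc β * (KF + KG) < (ε / (KF + KG + 1)) * (KF + KG) :=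
              mul_lt_mul_of_pos_right hβδ hlt
          _ < (ε / (KF + KG + 1)) * (KF + KG + 1) := by
              have : (0:ℝ) < ε / (KF + KG + 1) := by positivity
              nlinarith
    rw [div_mul_cancel₀ _ (ne_of_gt hden)] at h2
    linarith
  refine ⟨fun x => F x + v x, fun x => G x + w x, ?_, ?_, ?_, ?_, ?_⟩
  · exact BVPaux.bdd_add hp0 F v hF hbddv
  · exact BVPaux.bdd_add hp0 G w hG hbddu
  · intro x hx
    show (F x + v x) * (G x + w x) = F x * G x + h x
    by_cases hπx : π x
    · have hvx : v x = 0 := hvneg x (fun hc => hc hπx)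
      have hwx : w x = h x / F x := hwpos x hx hπx
      have hFx : F x ≠ 0 := by
        have := hFlow x hx hπx
        intro hz
        rw [hz] at this
        simp only [norm_zero] at this
        linarith
      rw [hvx, hwx]
      field_simp
      ring
    · have hwx : w x = 0 := hwneg x hπx
      have hvx : v x = h x / G x := hvpos x hx hπx
      have hGx : G x ≠ 0 := by
        have := hGlow x hx hπx
        intro hz
        rw [hz] at this
        simp only [norm_zero] at this
        linarith
      rw [hvx, hwx]
      field_simp
      ring
  · have he : (fun x => (F x + v x) - F x) = v := by
      funext x
      ring
    rw [he]
    calc bvNorm p v ≤ β * KF := hbvv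
      _ < ε := hbound KF hKFnn (by linarith)
  · have he : (fun x => (G x + w x) - G x) = w := by
      funext x
      ring
    rw [he]
    calc bvNorm p w ≤ β * KG := hbvu
      _ < ε := hbound KG hKGnn (by linarith)
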